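/- arXiv:1408.2839 — 2 statements merged into one kernel-verified Lean document; each statement's English description precedes it below -/
import Mathlib

section
/- Let κ be an uncountable regular cardinal carrying a normal κ-complete nonprincipal ultrafilter U on κ. Then for every family F = {x_α : α < κ} of κ many subsets of κ, there exists a ⊆ κ of cardinality κ such that no x_α splits a. In particular, every splitting family on κ has cardinality at least κ⁺. -/
open Cardinal

/-- The canonical type of order type `κ.ord`: ordinals below `κ.ord`. -/
abbrev OT (κ : Cardinal) := κ.ord.ToType

lemma OT_mk (κ : Cardinal) : #(OT κ) = κ := by
  rw [Cardinal.mk_toType, Cardinal.card_ord]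

lemma OT_Iic_small (κ : Cardinal) (hun : ℵ₀ < κ) (i : OT κ) :
    #(Set.Iic i) < κ := by
  have h1 : #(Set.Iio i) < κ := Cardinal.mk_Iio_ord_toType i
  rw [← Set.Iio_insert]
  calc #(insert i (Set.Iio i) : Set (OT κ)) ≤ #(Set.Iio i) + 1 := Cardinal.mk_insert_le
    _ < κ := Cardinal.add_lt_of_lt hun.le h1 (lt_trans Cardinal.one_lt_aleph0 hun)

lemma small_not_mem (κ : Cardinal) (hun : ℵ₀ < κ)
    (U : Ultrafilter (OT κ))
    (hcomp : ∀ s : Set (Set (OT κ)), #↥s < κ → (∀ x ∈ s, x ∈ U) → ⋂₀ s ∈ U)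
    (hnp : ∀ b : OT κ, ({b} : Set (OT κ)) ∉ U)
    (s : Set (OT κ)) (hs : #↥s < κ) : s ∉ U := by
  intro hsU
  set T : Set (Set (OT κ)) := (fun b => ({b} : Set (OT κ))ᶜ) '' s with hT
  have hTcard : #↥T < κ := lt_of_le_of_lt Cardinal.mk_image_le hs
  have hTmem : ∀ t ∈ T, t ∈ U := by
    rintro t ⟨b, _, rfl⟩
    exact Ultrafilter.compl_mem_iff_notMem.2 (hnp b)
  have h2 : ⋂₀ T ∈ U := hcomp T hTcard hTmem
  have h3 : ⋂₀ T = sᶜ := by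
    ext β
    simp only [Set.mem_sInter, hT, Set.mem_image, Set.mem_compl_iff, Set.mem_singleton_iff]
    constructor
    · intro h hβ
      exact h {β}ᶜ ⟨β, hβ, rfl⟩ rfl
    · rintro h t ⟨b, hb, rfl⟩ hbβ
      exact h (hbβ ▸ hb)
  rw [h3] at h2
  exact (Ultrafilter.compl_mem_iff_notMem.1 h2) hsU

lemma mem_card (κ : Cardinal) (hun : ℵ₀ < κ)
    (U : Ultrafilter (OT κ))
    (hcomp : ∀ s : Set (Set (OT κ)), #↥s < κ → (∀ x ∈ s, x ∈ U) → ⋂₀ s ∈ U)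
    (hnp : ∀ b : OT κ, ({b} : Set (OT κ)) ∉ U)
    (s : Set (OT κ)) (hsU : s ∈ U) : #↥s = κ := by
  have h1 : #↥s ≤ κ := (Cardinal.mk_set_le s).trans_eq (OT_mk κ)
  rcases lt_or_eq_of_le h1 with h | h
  · exact absurd hsU (small_not_mem κ hun U hcomp hnp s h)
  · exact h

lemma key (κ : Cardinal) (hun : ℵ₀ < κ)
    (U : Ultrafilter (OT κ))
    (hcomp : ∀ s : Set (Set (OT κ)), #↥s < κ → (∀ x ∈ s, x ∈ U) → ⋂₀ s ∈ U)
    (hnp : ∀ b : OT κ, ({b} : Set (OT κ)) ∉ U)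
    (hnormal : ∀ f : OT κ → Set (OT κ), (∀ i, f i ∈ U) →
      {β : OT κ | ∀ γ, γ < β → β ∈ f γ} ∈ U)
    (x : OT κ → Set (OT κ)) :
    ∃ a : Set (OT κ), #↥a = κ ∧
      ∀ i : OT κ, ¬ (#↥(a ∩ x i) = κ ∧ #↥(a \ x i) = κ) := by
  classical
  set f : OT κ → Set (OT κ) := fun i => if x i ∈ U then x i else (x i)ᶜ with hf
  have hfU : ∀ i, f i ∈ U := by
    intro i
    by_cases h : x i ∈ U
    · simpa [hf, h]
    · simpa [hf, h] using Ultrafilter.compl_mem_iff_notMem.2 h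
  set a : Set (OT κ) := {β : OT κ | ∀ γ, γ < β → β ∈ f γ} with ha
  have haU : a ∈ U := hnormal f hfU
  refine ⟨a, mem_card κ hun U hcomp hnp a haU, ?_⟩
  intro i ⟨h1, h2⟩
  have hsub : a \ f i ⊆ Set.Iic i := by
    rintro β ⟨hβa, hβf⟩
    by_contra hle
    exact hβf (hβa i (lt_of_not_ge fun h => hle h))
  have hsmall : #↥(a \ f i) < κ :=
    lt_of_le_of_lt (Cardinal.mk_le_mk_of_subset hsub) (OT_Iic_small κ hun i)
  by_cases h : x i ∈ U
  · rw [show f i = x i by simp [hf, h]] at hsmall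
    exact absurd h2 (ne_of_lt hsmall)
  · rw [show f i = (x i)ᶜ by simp [hf, h], Set.diff_compl] at hsmall
    exact absurd h1 (ne_of_lt hsmall)

theorem normal_measure_unsplit_kappa_family (κ : Cardinal)
    (hreg : κ.IsRegular) (hun : ℵ₀ < κ)
    (U : Ultrafilter (OT κ))
    (hcomp : ∀ s : Set (Set (OT κ)), #↥s < κ → (∀ x ∈ s, x ∈ U) → ⋂₀ s ∈ U)
    (hnp : ∀ b : OT κ, ({b} : Set (OT κ)) ∉ U)
    (hnormal : ∀ f : OT κ → Set (OT κ), (∀ i, f i ∈ U) →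
      {β : OT κ | ∀ γ, γ < β → β ∈ f γ} ∈ U)
    (x : OT κ → Set (OT κ)) :
    (∃ a : Set (OT κ), #↥a = κ ∧
        ∀ i : OT κ, ¬ (#↥(a ∩ x i) = κ ∧ #↥(a \ x i) = κ)) ∧
      ∀ F : Set (Set (OT κ)),
        (∀ a : Set (OT κ), #↥a = κ → ∃ y ∈ F, #↥(a ∩ y) = κ ∧ #↥(a \ y) = κ) →
        Order.succ κ ≤ #↥F := by
  refine ⟨key κ hun U hcomp hnp hnormal x, ?_⟩
  intro F hF
  rw [Order.succ_le_iff]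
  by_contra hle
  push_neg at hle
  have hFle : #↥F ≤ κ := hle
  -- F is nonempty
  have huniv : #↥(Set.univ : Set (OT κ)) = κ := by rw [Cardinal.mk_univ, OT_mk]
  obtain ⟨y₀, hy₀, -⟩ := hF Set.univ huniv
  have hne : Nonempty ↥F := ⟨⟨y₀, hy₀⟩⟩
  -- get a surjection OT κ → F
  have : #↥F ≤ #(OT κ) := by rw [OT_mk]; exact hFle
  obtain ⟨g⟩ := this
  have gsurj : Function.Surjective (Function.invFun (⇑g)) :=
    Function.invFun_surjective g.injective
  set x' : OT κ → Set (OT κ) := fun i => ((Function.invFun (⇑g) i : ↥F) : Set (OT κ)) with hx'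
  obtain ⟨a, hac, hans⟩ := key κ hun U hcomp hnp hnormal x'
  obtain ⟨y, hyF, hy1, hy2⟩ := hF a hac
  obtain ⟨i, hi⟩ := gsurj ⟨y, hyF⟩
  exact hans i ⟨by rw [hx']; simp [hi]; exact hy1, by rw [hx']; simp [hi]; exact hy2⟩
end

section
/- Let κ be a regular cardinal and μ < κ an infinite cardinal with 2^μ ≥ κ. Then there exists a splitting family on κ of cardinality at most μ. Consequently, if every family of fewer than κ subsets of κ fails to be splitting, then κ is a strong limit cardinal. -/
open Cardinal

universe u

/-- `x` splits `a`: both `a ∩ x` and `a \ x` have full cardinality `#α`. -/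
def Splits {α : Type u} (x a : Set α) : Prop :=
  #↥(a ∩ x) = #α ∧ #↥(a \ x) = #α

/-- `F` is a splitting family on `α`. -/
def IsSplittingFamily {α : Type u} (F : Set (Set α)) : Prop :=
  ∀ a : Set α, #↥a = #α → ∃ x ∈ F, Splits x a

lemma splitting_aux {α : Type u} (hreg : (#α).IsRegular)
    (μ : Cardinal.{u}) (hμinf : ℵ₀ ≤ μ) (hμκ : μ < #α) (hpow : #α ≤ 2 ^ μ) :
    ∃ F : Set (Set α), IsSplittingFamily F ∧ #↥F ≤ μ := by
  set M := μ.out with hM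
  have hMcard : #M = μ := Cardinal.mk_out μ
  have hpow' : #α ≤ #(M → Bool) := by
    have : (2 : Cardinal) ^ μ = #(M → Bool) := by
      simp [Cardinal.mk_arrow, hMcard]
    rwa [this] at hpow
  obtain ⟨f⟩ := Cardinal.le_def _ _ |>.mp hpow'
  set x : M → Set α := fun m => {β | f β m = true} with hx
  refine ⟨Set.range x, ?_, le_trans Cardinal.mk_range_le (le_of_eq hMcard)⟩
  intro a ha
  by_contra hcon
  push_neg at hcon
  have hns : ∀ m : M, ¬ Splits (x m) a := by
    intro m
    exact hcon (x m) ⟨m, rfl⟩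
  have hle : ∀ s : Set α, #↥s ≤ #α := fun s => Cardinal.mk_set_le s
  set s : M → Set α := fun m => if #↥(a ∩ x m) < #α then a ∩ x m else a \ x m with hs
  have hsmall : ∀ m, #↥(s m) < #α := by
    intro m
    by_cases h : #↥(a ∩ x m) < #α
    · simp only [hs, if_pos h]; exact h
    · simp only [hs, if_neg h]
      have h1 : #↥(a ∩ x m) = #α := le_antisymm (hle _) (not_lt.mp h)
      have h2 : #↥(a \ x m) ≠ #α := fun h2 => hns m ⟨h1, h2⟩
      exact lt_of_le_of_ne (hle _) h2
  set U : Set α := ⋃ m, s m with hU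
  have hUsmall : #↥U < #α := by
    refine lt_of_le_of_lt (Cardinal.mk_iUnion_le s) ?_
    refine Cardinal.mul_lt_of_lt hreg.aleph0_le (hMcard ▸ hμκ) ?_
    exact Cardinal.iSup_lt_of_isRegular hreg (hMcard ▸ hμκ) hsmall
  have hdiff : #↥(a \ U) = #α := by
    have hsub : a ∩ U ⊆ a := Set.inter_subset_left
    have heq : a \ (a ∩ U) = a \ U := by
      ext β; simp only [Set.mem_diff, Set.mem_inter_iff]; tauto
    have := Cardinal.mk_diff_add_mk hsub
    rw [heq] at this
    by_contra hne
    have hlt : #↥(a \ U) < #α := lt_of_le_of_ne (hle _) hne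
    have hltU : #↥(a ∩ U) < #α :=
      lt_of_le_of_lt (Cardinal.mk_le_mk_of_subset Set.inter_subset_right) hUsmall
    have : #↥a < #α := by
      rw [← this]
      exact Cardinal.add_lt_of_lt hreg.aleph0_le hlt hltU
    exact absurd ha (ne_of_lt this)
  have h2 : (1 : Cardinal) < #↥(a \ U) := by
    rw [hdiff]; exact lt_of_lt_of_le Cardinal.one_lt_aleph0 hreg.aleph0_le
  rw [Cardinal.one_lt_iff_nontrivial] at h2
  obtain ⟨⟨β, hβ⟩, ⟨γ, hγ⟩, hne⟩ := h2
  have hβγ : β ≠ γ := fun h => hne (Subtype.ext h)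
  apply hβγ
  apply f.injective
  funext m
  have hβm : β ∉ s m := fun h => hβ.2 (Set.mem_iUnion.mpr ⟨m, h⟩)
  have hγm : γ ∉ s m := fun h => hγ.2 (Set.mem_iUnion.mpr ⟨m, h⟩)
  by_cases h : #↥(a ∩ x m) < #α
  · simp only [hs, if_pos h] at hβm hγm
    have hβ' : f β m ≠ true := fun ht => hβm ⟨hβ.1, ht⟩
    have hγ' : f γ m ≠ true := fun ht => hγm ⟨hγ.1, ht⟩
    simp [Bool.not_eq_true] at hβ' hγ'
    rw [hβ', hγ']
  · simp only [hs, if_neg h] at hβm hγm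
    have hβ' : f β m = true := by
      by_contra ht
      exact hβm ⟨hβ.1, ht⟩
    have hγ' : f γ m = true := by
      by_contra ht
      exact hγm ⟨hγ.1, ht⟩
    rw [hβ', hγ']

theorem splitting_family_of_size_mu {α : Type u} (hreg : (#α).IsRegular)
    (μ : Cardinal.{u}) (hμinf : ℵ₀ ≤ μ) (hμκ : μ < #α) (hpow : #α ≤ 2 ^ μ) :
    (∃ F : Set (Set α), IsSplittingFamily F ∧ #↥F ≤ μ) ∧
      ((∀ F : Set (Set α), #↥F < #α → ¬ IsSplittingFamily F) →
        (#α).IsStrongLimit) := by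
  refine ⟨splitting_aux hreg μ hμinf hμκ hpow, ?_⟩
  intro H
  refine ⟨hreg.pos.ne', ?_⟩
  intro c hc
  by_contra hle
  push_neg at hle
  have hω : ℵ₀ < #α := lt_of_le_of_lt hμinf hμκ
  set μ' := max c ℵ₀ with hμ'
  have hμ'inf : ℵ₀ ≤ μ' := le_max_right _ _
  have hμ'κ : μ' < #α := max_lt hc hω
  have hpow' : #α ≤ 2 ^ μ' :=
    le_trans hle (Cardinal.power_le_power_left two_ne_zero (le_max_left _ _))
  obtain ⟨F, hF, hFcard⟩ := splitting_aux hreg μ' hμ'inf hμ'κ hpow'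
  exact H F (lt_of_le_of_lt hFcard hμ'κ) hF
end
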